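/- Block decomposition of the gadget output state: for every n×n complex matrices σ and ρ and every θ ∈ ℝ, writing V₀ := R_σ(θ) + R_σ(θ+π) and V₁ := R_σ(θ) − R_σ(θ+π), one has R′_σ(θ) · (e00 ⊗ ρ) · (R′_σ(θ))ᴴ = (1/4) · Σ_{b,b' ∈ {0,1}} E_{b b'} ⊗ (V_b · ρ · V_{b'}ᴴ), where E_{b b'} is the 2×2 matrix unit with 1 in entry (b,b') and 0 elsewhere. -/

import Mathlib

open Matrix Kronecker Complex

/-- The parameterized rotation gate `R_σ(θ) = cos(θ/2) • 1 − (i·sin(θ/2)) • σ`. -/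
noncomputable def Rgate {n : ℕ} (σ : Matrix (Fin n) (Fin n) ℂ) (θ : ℝ) :
    Matrix (Fin n) (Fin n) ℂ :=
  (Real.cos (θ / 2) : ℂ) • (1 : Matrix (Fin n) (Fin n) ℂ)
    - (Complex.I * (Real.sin (θ / 2) : ℂ)) • σ

/-- `|0⟩⟨0|`. -/
def e00 : Matrix (Fin 2) (Fin 2) ℂ := !![1, 0; 0, 0]

/-- `|1⟩⟨1|`. -/
def e11 : Matrix (Fin 2) (Fin 2) ℂ := !![0, 0; 0, 1]

/-- The Hadamard matrix. -/
noncomputable def Hmat : Matrix (Fin 2) (Fin 2) ℂ :=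
  ((1 / Real.sqrt 2 : ℝ) : ℂ) • !![1, 1; 1, -1]

/-- The Pauli-Z ancilla observable. -/
def ZA : Matrix (Fin 2) (Fin 2) ℂ := !![1, 0; 0, -1]

/-- The controlled rotation `C_Rσ(θ) = |0⟩⟨0| ⊗ R_σ(θ) + |1⟩⟨1| ⊗ R_σ(θ+π)`. -/
noncomputable def CR {n : ℕ} (σ : Matrix (Fin n) (Fin n) ℂ) (θ : ℝ) :
    Matrix (Fin 2 × Fin n) (Fin 2 × Fin n) ℂ :=
  e00 ⊗ₖ Rgate σ θ + e11 ⊗ₖ Rgate σ (θ + Real.pi)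

/-- The differentiation gadget `R′_σ(θ) = (H ⊗ 1) C_Rσ(θ) (H ⊗ 1)`. -/
noncomputable def Rgadget {n : ℕ} (σ : Matrix (Fin n) (Fin n) ℂ) (θ : ℝ) :
    Matrix (Fin 2 × Fin n) (Fin 2 × Fin n) ℂ :=
  (Hmat ⊗ₖ (1 : Matrix (Fin n) (Fin n) ℂ)) * CR σ θ
    * (Hmat ⊗ₖ (1 : Matrix (Fin n) (Fin n) ℂ))

lemma kron_conjTranspose {l m p q : Type*} (A : Matrix l m ℂ) (B : Matrix p q ℂ) :
    (A ⊗ₖ B)ᴴ = Aᴴ ⊗ₖ Bᴴ := by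
  ext ⟨i, j⟩ ⟨k, l⟩
  simp [conjTranspose_apply, kroneckerMap_apply, mul_comm]

lemma sub_kron {l m p q : Type*} (A B : Matrix l m ℂ) (C : Matrix p q ℂ) :
    (A - B) ⊗ₖ C = A ⊗ₖ C - B ⊗ₖ C := by
  ext ⟨i, j⟩ ⟨k, l⟩
  simp [kroneckerMap_apply, sub_mul]

lemma kron_sub {l m p q : Type*} (A : Matrix l m ℂ) (B C : Matrix p q ℂ) :
    A ⊗ₖ (B - C) = A ⊗ₖ B - A ⊗ₖ C := by
  ext ⟨i, j⟩ ⟨k, l⟩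
  simp [kroneckerMap_apply, mul_sub]

/-- Block decomposition of the gadget output state. -/
theorem gadget_block_decomposition (n : ℕ) (σ ρ : Matrix (Fin n) (Fin n) ℂ) (θ : ℝ)
    (V : Fin 2 → Matrix (Fin n) (Fin n) ℂ)
    (hV0 : V 0 = Rgate σ θ + Rgate σ (θ + Real.pi))
    (hV1 : V 1 = Rgate σ θ - Rgate σ (θ + Real.pi)) :
    Rgadget σ θ * (e00 ⊗ₖ ρ) * (Rgadget σ θ)ᴴ
      = (1 / 4 : ℂ) • ∑ b : Fin 2, ∑ b' : Fin 2,
          (Matrix.single b b' (1 : ℂ)) ⊗ₖ (V b * ρ * (V b')ᴴ) := by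
  set A := Rgate σ θ with hA
  set B := Rgate σ (θ + Real.pi) with hB
  -- abbreviations for 2×2 matrices
  set E00 : Matrix (Fin 2) (Fin 2) ℂ := !![1, 0; 0, 0] with hE00
  set E01 : Matrix (Fin 2) (Fin 2) ℂ := !![0, 1; 0, 0] with hE01
  set E10 : Matrix (Fin 2) (Fin 2) ℂ := !![0, 0; 1, 0] with hE10
  set E11 : Matrix (Fin 2) (Fin 2) ℂ := !![0, 0; 0, 1] with hE11
  have c2 : ((1 / Real.sqrt 2 : ℝ) : ℂ) * ((1 / Real.sqrt 2 : ℝ) : ℂ) = (1 / 2 : ℂ) := by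
    norm_cast
    rw [div_mul_div_comm, one_mul, Real.mul_self_sqrt (by norm_num)]
    norm_num
  -- gadget in block form
  have hP : (!![1,1;1,-1] : Matrix (Fin 2) (Fin 2) ℂ) * e00 * !![1,1;1,-1]
      = !![1,1;1,1] := by
    rw [e00, Matrix.mul_fin_two, Matrix.mul_fin_two]; norm_num
  have hQ : (!![1,1;1,-1] : Matrix (Fin 2) (Fin 2) ℂ) * e11 * !![1,1;1,-1]
      = !![1,-1;-1,1] := by
    rw [e11, Matrix.mul_fin_two, Matrix.mul_fin_two]; norm_num
  have hgad : Rgadget σ θ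
      = (1 / 2 : ℂ) • ((!![1,1;1,1] : Matrix (Fin 2) (Fin 2) ℂ) ⊗ₖ A
          + (!![1,-1;-1,1] : Matrix (Fin 2) (Fin 2) ℂ) ⊗ₖ B) := by
    rw [Rgadget, CR, Hmat, Matrix.smul_kronecker, smul_mul_assoc, smul_mul_assoc,
      mul_smul_comm, smul_smul, c2, ← hA, ← hB]
    congr 1
    simp only [mul_add, add_mul, ← Matrix.mul_kronecker_mul, Matrix.one_mul, Matrix.mul_one]
    rw [hP, hQ]
  -- conjugate transposes of the 2×2 constants
  have hct : ∀ (a b c d : ℂ), (!![a, b; c, d])ᴴ = !![star a, star c; star b, star d] := by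
    intro a b c d
    ext i j
    fin_cases i <;> fin_cases j <;> simp [conjTranspose_apply]
  -- std basis matrices
  have hs00 : Matrix.single (0 : Fin 2) (0 : Fin 2) (1 : ℂ) = E00 := by
    ext i j; fin_cases i <;> fin_cases j <;> simp [Matrix.single, hE00]
  have hs01 : Matrix.single (0 : Fin 2) (1 : Fin 2) (1 : ℂ) = E01 := by
    ext i j; fin_cases i <;> fin_cases j <;> simp [Matrix.single, hE01]
  have hs10 : Matrix.single (1 : Fin 2) (0 : Fin 2) (1 : ℂ) = E10 := by
    ext i j; fin_cases i <;> fin_cases j <;> simp [Matrix.single, hE10]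
  have hs11 : Matrix.single (1 : Fin 2) (1 : Fin 2) (1 : ℂ) = E11 := by
    ext i j; fin_cases i <;> fin_cases j <;> simp [Matrix.single, hE11]
  rw [hgad]
  rw [Matrix.conjTranspose_smul, smul_mul_assoc, smul_mul_assoc, mul_smul_comm, smul_smul]
  have hscal : (1 / 2 : ℂ) * star (1 / 2 : ℂ) = (1 / 4 : ℂ) := by
    simp; norm_num
  rw [hscal]
  congr 1
  -- expand left-hand side
  rw [conjTranspose_add, kron_conjTranspose, kron_conjTranspose, hct, hct]
  norm_num
  simp only [add_mul, mul_add, ← Matrix.mul_kronecker_mul]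
  -- compute the four 2×2 block-coefficient matrices
  have h1 : (!![1,1;1,1] : Matrix (Fin 2) (Fin 2) ℂ) * e00 * !![1,1;1,1]
      = E00 + E01 + E10 + E11 := by
    rw [e00, Matrix.mul_fin_two, Matrix.mul_fin_two, hE00, hE01, hE10, hE11]
    ext i j; fin_cases i <;> fin_cases j <;> norm_num
  have h2 : (!![1,1;1,1] : Matrix (Fin 2) (Fin 2) ℂ) * e00 * !![1,-1;-1,1]
      = E00 - E01 + E10 - E11 := by
    rw [e00, Matrix.mul_fin_two, Matrix.mul_fin_two, hE00, hE01, hE10, hE11]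
    ext i j; fin_cases i <;> fin_cases j <;> norm_num
  have h3 : (!![1,-1;-1,1] : Matrix (Fin 2) (Fin 2) ℂ) * e00 * !![1,1;1,1]
      = E00 + E01 - E10 - E11 := by
    rw [e00, Matrix.mul_fin_two, Matrix.mul_fin_two, hE00, hE01, hE10, hE11]
    ext i j; fin_cases i <;> fin_cases j <;> norm_num
  have h4 : (!![1,-1;-1,1] : Matrix (Fin 2) (Fin 2) ℂ) * e00 * !![1,-1;-1,1]
      = E00 - E01 - E10 + E11 := by
    rw [e00, Matrix.mul_fin_two, Matrix.mul_fin_two, hE00, hE01, hE10, hE11]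
    ext i j; fin_cases i <;> fin_cases j <;> norm_num
  rw [h1, h2, h3, h4]
  -- expand the right-hand side
  rw [hs00, hs01, hs10, hs11, hV0, hV1]
  simp only [conjTranspose_add, conjTranspose_sub, mul_add, mul_sub, add_mul, sub_mul,
    Matrix.add_kronecker, Matrix.kronecker_add, sub_kron, kron_sub]
  abel
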